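/- Let (f₀, f₁ : A ⇉ B) and (f₀', f₁' : A' ⇉ B') be reflexive pairs of monotone maps between partial orders, with coinserters c : B → C and c' : B' → C' respectively. Then the componentwise product map c × c' : B × B' → C × C' (where products of posets carry the componentwise order) is a coinserter of the pair (f₀ × f₀', f₁ × f₁' : A × A' ⇉ B × B'). In other words, reflexive coinserters in the category of posets and monotone maps commute with binary products. -/

import Mathlib

universe u

/-- `IsCoinserter f₀ f₁ c` says that the monotone map `c : B →o C` is a coinserter of the
parallel pair of monotone maps `f₀, f₁ : A →o B` in the category of partial orders and
monotone maps. -/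
def IsCoinserter {A B C : Type u} [PartialOrder A] [PartialOrder B] [PartialOrder C]
    (f₀ f₁ : A →o B) (c : B →o C) : Prop :=
  (∀ a, c (f₀ a) ≤ c (f₁ a)) ∧
  (∀ (D : Type u) (_ : PartialOrder D) (g : B →o D),
    (∀ a, g (f₀ a) ≤ g (f₁ a)) → ∃ h : C →o D, ∀ b, g b = h (c b)) ∧
  (∀ (D : Type u) (_ : PartialOrder D) (u₀ v₀ : C →o D),
    (∀ b, u₀ (c b) ≤ v₀ (c b)) → ∀ x, u₀ x ≤ v₀ x)

/-- Reflexive coinserters in the category of posets and monotone maps commute with binary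
products: if `(f₀, f₁ : A ⇉ B)` and `(f₀', f₁' : A' ⇉ B')` are reflexive pairs of monotone
maps with coinserters `c : B →o C` and `c' : B' →o C'`, then the componentwise product map
`c × c' : B × B' →o C × C'` is a coinserter of `(f₀ × f₀', f₁ × f₁')`. -/
theorem reflexive_coinserters_commute_with_binary_products
    {A B C A' B' C' : Type u} [PartialOrder A] [PartialOrder B] [PartialOrder C]
    [PartialOrder A'] [PartialOrder B'] [PartialOrder C']
    (f₀ f₁ : A →o B) (f₀' f₁' : A' →o B')
    (δ : B →o A) (hδ₀ : ∀ b, f₀ (δ b) = b) (hδ₁ : ∀ b, f₁ (δ b) = b)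
    (δ' : B' →o A') (hδ₀' : ∀ b, f₀' (δ' b) = b) (hδ₁' : ∀ b, f₁' (δ' b) = b)
    (c : B →o C) (c' : B' →o C')
    (hc : IsCoinserter f₀ f₁ c) (hc' : IsCoinserter f₀' f₁' c') :
    IsCoinserter (f₀.prodMap f₀') (f₁.prodMap f₁') (c.prodMap c') := by
  obtain ⟨hc1, hc2, hc3⟩ := hc
  obtain ⟨hc1', hc2', hc3'⟩ := hc'
  refine ⟨fun a => ⟨hc1 a.1, hc1' a.2⟩, ?_, ?_⟩
  · intro D _ g hg
    -- curry in the first variable: for each b', factor b ↦ g (b, b') through c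
    have key : ∀ b' : B', ∃ h : C →o D, ∀ b, g (b, b') = h (c b) := by
      intro b'
      refine hc2 D _ ⟨fun b => g (b, b'), fun x y hxy => g.monotone ⟨hxy, le_refl _⟩⟩ ?_
      intro a
      have := hg (a, δ' b')
      exact (by simpa [hδ₀', hδ₁'] using this : g (f₀ a, b') ≤ g (f₁ a, b'))
    choose H hH using key
    -- H : B' → (C →o D); show it's monotone and factor through c'
    have Hmono : Monotone H := by
      intro y₁ y₂ hy
      intro x
      refine hc3 D _ (H y₁) (H y₂) (fun b => ?_) x
      rw [← hH y₁ b, ← hH y₂ b]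
      exact g.monotone ⟨le_refl _, hy⟩
    have hfac : ∀ a', (⟨H, Hmono⟩ : B' →o (C →o D)) (f₀' a') ≤
        (⟨H, Hmono⟩ : B' →o (C →o D)) (f₁' a') := by
      intro a' x
      refine hc3 D _ _ _ (fun b => ?_) x
      show (H (f₀' a')) (c b) ≤ (H (f₁' a')) (c b)
      rw [← hH (f₀' a') b, ← hH (f₁' a') b]
      have := hg (δ b, a')
      simpa [hδ₀, hδ₁] using this
    obtain ⟨K, hK⟩ := hc2' (C →o D) _ ⟨H, Hmono⟩ hfac
    refine ⟨⟨fun p => K p.2 p.1, ?_⟩, ?_⟩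
    · intro p q hpq
      exact le_trans ((K p.2).monotone hpq.1) (K.monotone hpq.2 q.1)
    · intro b
      simp only [OrderHom.prodMap, OrderHom.coe_mk, Prod.map]
      show g b = K (c' b.2) (c b.1)
      rw [← hK b.2]
      exact hH b.2 b.1
  · intro D _ u₀ v₀ hub p
    obtain ⟨x, y⟩ := p
    have step1 : ∀ b : B, ∀ y : C', u₀ (c b, y) ≤ v₀ (c b, y) := by
      intro b y
      refine hc3' D _ ⟨fun y => u₀ (c b, y), fun a b' h => u₀.monotone ⟨le_refl _, h⟩⟩
        ⟨fun y => v₀ (c b, y), fun a b' h => v₀.monotone ⟨le_refl _, h⟩⟩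
        (fun b' => hub (b, b')) y
    refine hc3 D _ ⟨fun x => u₀ (x, y), fun a b h => u₀.monotone ⟨h, le_refl _⟩⟩
      ⟨fun x => v₀ (x, y), fun a b h => v₀.monotone ⟨h, le_refl _⟩⟩
      (fun b => step1 b y) x
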